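/- Let n, k be positive integers, K = C((t)), and γ ∈ GL_n(K) the companion matrix of x^n - t^k (top-right entry t^k, subdiagonal entries 1, all else 0). If (g, μ, λ) ∈ GL_n(C[[t]]-valued loop group extension) × C^× × C^× satisfies g(γ·μ)g^{-1}(λ·t) = γ(t) in the appropriate sense and g·e_1 = e_1, then μ^n λ^k = 1 and g = diag(1, μ^{-1}, μ^{-2}, ..., μ^{1-n}). Consequently the stabilizer of the pair (γ, e_1) under this combined adjoint-scaling-rotation action is isomorphic to C^×, given by ν ↦ (diag(1, ν^k, ..., ν^{(n-1)k}), ν^{-k}, ν^n). -/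

import Mathlib

open scoped Matrix

noncomputable section

/-- `K = ℂ((t))`, the field of formal Laurent series. -/
abbrev KK : Type := LaurentSeries ℂ

/-- The uniformizer `t`. -/
def tt : KK := (PowerSeries.X : PowerSeries ℂ)

/-- The companion matrix of `x^n - (top-right entry s)`: first row `(0, ..., 0, s)`,
`1`s on the subdiagonal, `0` elsewhere. -/
def gam (n : ℕ) (s : KK) : Matrix (Fin n) (Fin n) KK := fun i j =>
  if (i : ℕ) = 0 ∧ (j : ℕ) = n - 1 then s
  else if (i : ℕ) = (j : ℕ) + 1 then 1 else 0

/-- The first standard basis vector `e_1`. -/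
def e1 (n : ℕ) : Fin n → KK := fun i => if (i : ℕ) = 0 then 1 else 0

lemma mul_gam_last {n : ℕ} (hn : 0 < n) (s : KK) (G : Matrix (Fin n) (Fin n) KK)
    (i j : Fin n) (hj : (j:ℕ) = n - 1) :
    (G * gam n s) i j = G i ⟨0, hn⟩ * s := by
  rw [Matrix.mul_apply, Finset.sum_eq_single (⟨0, hn⟩ : Fin n)]
  · simp [gam, hj]
  · intro l _ hl
    have hl' : (l:ℕ) ≠ 0 := fun h => hl (Fin.ext h)
    have h2 : (l:ℕ) ≠ (j:ℕ)+1 := by have := l.isLt; omega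
    simp [gam, hl', h2]
  · intro h; exact absurd (Finset.mem_univ _) h

lemma mul_gam_mid {n : ℕ} (s : KK) (G : Matrix (Fin n) (Fin n) KK)
    (i j : Fin n) (h : (j:ℕ)+1 < n) :
    (G * gam n s) i j = G i ⟨(j:ℕ)+1, h⟩ := by
  rw [Matrix.mul_apply, Finset.sum_eq_single (⟨(j:ℕ)+1, h⟩ : Fin n)]
  · have hj : (j:ℕ) ≠ n - 1 := by omega
    simp [gam, hj]
  · intro l _ hl
    have hl' : (l:ℕ) ≠ (j:ℕ)+1 := fun hh => hl (Fin.ext hh)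
    have hj : ¬((l:ℕ) = 0 ∧ (j:ℕ) = n - 1) := by omega
    simp [gam, hj, hl']
  · intro h; exact absurd (Finset.mem_univ _) h

lemma gam_mul_zero {n : ℕ} (hn : 0 < n) (s : KK) (G : Matrix (Fin n) (Fin n) KK)
    (i j : Fin n) (hi : (i:ℕ) = 0) :
    (gam n s * G) i j = s * G ⟨n-1, by omega⟩ j := by
  rw [Matrix.mul_apply, Finset.sum_eq_single (⟨n-1, by omega⟩ : Fin n)]
  · simp [gam, hi]
  · intro l _ hl
    have hl' : (l:ℕ) ≠ n-1 := fun hh => hl (Fin.ext hh)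
    have h2 : (i:ℕ) ≠ (l:ℕ)+1 := by omega
    simp [gam, hl', h2]
  · intro h; exact absurd (Finset.mem_univ _) h

lemma gam_mul_pos {n : ℕ} (s : KK) (G : Matrix (Fin n) (Fin n) KK)
    (i j : Fin n) (hi : 0 < (i:ℕ)) :
    (gam n s * G) i j = G ⟨(i:ℕ)-1, by have := i.isLt; omega⟩ j := by
  obtain ⟨iv, hlt⟩ := i
  simp only [Fin.val_mk] at hi ⊢
  rw [Matrix.mul_apply, Finset.sum_eq_single (⟨iv-1, by omega⟩ : Fin n)]
  · have h1 : ¬(iv = 0 ∧ iv - 1 = n - 1) := by omega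
    have h2 : iv = (iv-1)+1 := by omega
    simp only [gam, Fin.val_mk, h1, if_false, if_neg h1, if_pos h2, one_mul]
  · intro l _ hl
    have hl' : (l:ℕ) ≠ iv-1 := fun hh => hl (Fin.ext hh)
    have h1 : ¬(iv = 0 ∧ (l:ℕ) = n - 1) := by omega
    have h2 : iv ≠ (l:ℕ)+1 := by omega
    simp [gam, h1, h2]
  · intro h; exact absurd (Finset.mem_univ _) h

lemma mulVec_e1 {n : ℕ} (hn : 0 < n) (G : Matrix (Fin n) (Fin n) KK) (i : Fin n) :
    G.mulVec (e1 n) i = G i ⟨0, hn⟩ := by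
  rw [Matrix.mulVec, dotProduct, Finset.sum_eq_single (⟨0, hn⟩ : Fin n)]
  · simp [e1]
  · intro l _ hl
    have : (l:ℕ) ≠ 0 := fun h => hl (Fin.ext h)
    simp [e1, this]
  · intro h; exact absurd (Finset.mem_univ _) h

lemma part1 (n k : ℕ) (hn : 0 < n) (hk : 0 < k) (μ lam : ℂ) (hμ : μ ≠ 0) (hlam : lam ≠ 0)
    (g : (Matrix (Fin n) (Fin n) KK)ˣ)
    (heq : (algebraMap ℂ KK μ) •
          ((g : Matrix (Fin n) (Fin n) KK) * gam n ((algebraMap ℂ KK lam * tt) ^ k) *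
            ((g⁻¹ : (Matrix (Fin n) (Fin n) KK)ˣ) : Matrix (Fin n) (Fin n) KK)) =
        gam n (tt ^ k))
    (hv : Matrix.mulVec (g : Matrix (Fin n) (Fin n) KK) (e1 n) = e1 n) :
    μ ^ n * lam ^ k = 1 ∧
      (g : Matrix (Fin n) (Fin n) KK) =
        Matrix.diagonal fun i : Fin n => algebraMap ℂ KK ((μ ^ (i : ℕ))⁻¹) := by
  set G : Matrix (Fin n) (Fin n) KK := (g : Matrix (Fin n) (Fin n) KK) with hG
  set s : KK := (algebraMap ℂ KK lam * tt) ^ k with hs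
  have haμ : algebraMap ℂ KK μ ≠ 0 := fun h => hμ (by
    have := (algebraMap ℂ KK).injective (h.trans (map_zero _).symm); simpa using this)
  have key : ∀ i j : Fin n,
      algebraMap ℂ KK μ * ((G * gam n s) i j) = (gam n (tt ^ k) * G) i j := by
    intro i j
    have h2 : (algebraMap ℂ KK μ •
        (G * gam n s * ((g⁻¹ : (Matrix (Fin n) (Fin n) KK)ˣ) : Matrix (Fin n) (Fin n) KK))) * G
        = gam n (tt ^ k) * G := by rw [heq]
    rw [Matrix.smul_mul (algebraMap ℂ KK μ)
      (G * gam n s * ((g⁻¹ : (Matrix (Fin n) (Fin n) KK)ˣ) : Matrix (Fin n) (Fin n) KK)) G,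
      mul_assoc (G * gam n s)] at h2
    have h3 : ((g⁻¹ : (Matrix (Fin n) (Fin n) KK)ˣ) : Matrix (Fin n) (Fin n) KK) * G = 1 := by
      rw [hG]; exact_mod_cast g.inv_mul
    rw [h3, mul_one] at h2
    have := congrFun (congrFun h2 i) j
    simpa [Matrix.smul_apply] using this
  have hc0 : ∀ i : Fin n, G i ⟨0, hn⟩ = if (i:ℕ) = 0 then 1 else 0 := by
    intro i
    have := congrFun hv i
    rw [mulVec_e1 hn] at this
    simpa [e1] using this
  have hcol : ∀ m, ∀ hm : m < n, ∀ i : Fin n,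
      G i ⟨m, hm⟩ = if (i:ℕ) = m then algebraMap ℂ KK ((μ ^ m)⁻¹) else 0 := by
    intro m
    induction m with
    | zero =>
      intro hm i
      simpa using hc0 i
    | succ m ih =>
      intro hm i
      have hm' : m < n := by omega
      have hrel := key i ⟨m, hm'⟩
      rw [mul_gam_mid s G i ⟨m, hm'⟩ (by simpa using hm)] at hrel
      simp only [Fin.val_mk] at hrel
      by_cases hi : (i:ℕ) = 0
      · rw [gam_mul_zero hn _ G i ⟨m, hm'⟩ hi] at hrel
        rw [ih hm' ⟨n-1, by omega⟩] at hrel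
        have hne : ¬((⟨n-1, by omega⟩ : Fin n) : ℕ) = m := by simp; omega
        rw [if_neg hne, mul_zero] at hrel
        have : G i ⟨m+1, hm⟩ = 0 := by
          have := mul_eq_zero.mp hrel
          tauto
        rw [this, if_neg (by omega)]
      · have hipos : 0 < (i:ℕ) := Nat.pos_of_ne_zero hi
        rw [gam_mul_pos _ G i ⟨m, hm'⟩ hipos] at hrel
        rw [ih hm' ⟨(i:ℕ)-1, by have := i.isLt; omega⟩] at hrel
        by_cases him : (i:ℕ) = m+1
        · have : ((⟨(i:ℕ)-1, by have := i.isLt; omega⟩ : Fin n) : ℕ) = m := by simp; omega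
          rw [if_pos this] at hrel
          rw [if_pos him]
          apply mul_left_cancel₀ haμ
          rw [hrel, ← map_mul]
          congr 1
          rw [pow_succ]
          field_simp
        · have : ¬((⟨(i:ℕ)-1, by have := i.isLt; omega⟩ : Fin n) : ℕ) = m := by simp; omega
          rw [if_neg this] at hrel
          have : G i ⟨m+1, hm⟩ = 0 := by
            have := mul_eq_zero.mp hrel
            tauto
          rw [this, if_neg him]
  have hdiag : G = Matrix.diagonal fun i : Fin n => algebraMap ℂ KK ((μ ^ (i : ℕ))⁻¹) := by
    refine Matrix.ext fun i j => ?_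
    rw [Matrix.diagonal_apply]
    have := hcol (j:ℕ) j.isLt i
    rw [Fin.eta] at this
    rw [this]
    by_cases h : i = j
    · subst h; rw [if_pos rfl, if_pos rfl]
    · rw [if_neg h, if_neg (fun hh => h (Fin.ext hh))]
  refine ⟨?_, hdiag⟩
  have hrel := key ⟨0, hn⟩ ⟨n-1, by omega⟩
  rw [mul_gam_last hn s G _ _ (by simp)] at hrel
  rw [gam_mul_zero hn _ G _ _ (by simp)] at hrel
  rw [hcol 0 hn ⟨0, hn⟩, if_pos rfl] at hrel
  rw [hcol (n-1) (by omega) ⟨n-1, by omega⟩, if_pos rfl] at hrel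
  simp only [pow_zero, inv_one, map_one, one_mul] at hrel
  have htt : (tt ^ k : KK) ≠ 0 := pow_ne_zero _ (by simp [tt])
  rw [hs, mul_pow, ← map_pow] at hrel
  -- hrel : aμ * (a(lam^k) * tt^k) = tt^k * a((μ^(n-1))⁻¹)
  have h4 : algebraMap ℂ KK (μ * lam ^ k) = algebraMap ℂ KK ((μ ^ (n-1))⁻¹) := by
    apply mul_right_cancel₀ htt
    rw [map_mul, mul_assoc, hrel, mul_comm]
  have h5 : μ * lam ^ k = (μ ^ (n-1))⁻¹ := (algebraMap ℂ KK).injective h4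
  have h6 : μ ^ n = μ * μ ^ (n-1) := by
    conv_lhs => rw [show n = 1 + (n-1) by omega]
    rw [pow_add, pow_one]
  rw [h6]
  field_simp at h5
  linear_combination h5

lemma part2 (n k : ℕ) (hn : 0 < n) (hk : 0 < k) (ν : ℂ) (hν : ν ≠ 0) :
    (algebraMap ℂ KK ((ν ^ k)⁻¹)) •
          ((Matrix.diagonal fun i : Fin n => algebraMap ℂ KK (ν ^ ((i : ℕ) * k))) *
            gam n ((algebraMap ℂ KK (ν ^ n) * tt) ^ k) *
            (Matrix.diagonal fun i : Fin n => algebraMap ℂ KK ((ν ^ ((i : ℕ) * k))⁻¹))) =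
        gam n (tt ^ k) := by
  refine Matrix.ext fun i j => ?_
  simp only [Matrix.smul_apply, Matrix.mul_diagonal, Matrix.diagonal_mul, smul_eq_mul]
  have hs : (algebraMap ℂ KK (ν ^ n) * tt) ^ k
      = algebraMap ℂ KK (ν ^ (n*k)) * tt ^ k := by
    rw [mul_pow, ← map_pow, ← pow_mul]
  by_cases h1 : (i:ℕ) = 0 ∧ (j:ℕ) = n-1
  · obtain ⟨hi0, hjn⟩ := h1
    simp only [gam]
    rw [if_pos (⟨hi0, hjn⟩ : (i:ℕ) = 0 ∧ (j:ℕ) = n-1),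
        if_pos (⟨hi0, hjn⟩ : (i:ℕ) = 0 ∧ (j:ℕ) = n-1), hs, hi0, hjn]
    rw [show (algebraMap ℂ KK) ((ν ^ k)⁻¹) *
        ((algebraMap ℂ KK) (ν ^ (0 * k)) * ((algebraMap ℂ KK) (ν ^ (n * k)) * tt ^ k) *
          (algebraMap ℂ KK) ((ν ^ ((n-1) * k))⁻¹))
      = algebraMap ℂ KK ((ν ^ k)⁻¹ * ν ^ (0*k) * ν ^ (n*k) * (ν ^ ((n-1)*k))⁻¹) * tt ^ k by
        simp only [map_mul]; ring]
    have : (ν ^ k)⁻¹ * ν ^ (0*k) * ν ^ (n*k) * (ν ^ ((n-1)*k))⁻¹ = 1 := by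
      have hnk : n * k = k + (n-1) * k := by cases n with | zero => omega | succ m => simp [Nat.succ_sub_one]; ring
      rw [hnk, pow_add, zero_mul, pow_zero]
      field_simp
    rw [this, map_one, one_mul]
  · by_cases h2 : (i:ℕ) = (j:ℕ)+1
    · simp only [gam]
      rw [if_neg h1, if_neg h1, if_pos h2]
      rw [show (algebraMap ℂ KK) ((ν ^ k)⁻¹) *
          ((algebraMap ℂ KK) (ν ^ ((i:ℕ) * k)) * 1 * (algebraMap ℂ KK) ((ν ^ ((j:ℕ) * k))⁻¹))
        = algebraMap ℂ KK ((ν ^ k)⁻¹ * ν ^ ((i:ℕ)*k) * (ν ^ ((j:ℕ)*k))⁻¹) by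
          simp only [map_mul]; ring]
      rw [show (ν ^ k)⁻¹ * ν ^ ((i:ℕ)*k) * (ν ^ ((j:ℕ)*k))⁻¹ = 1 by
        rw [h2, add_mul, one_mul, pow_add]; field_simp]
      exact map_one _
    · simp [gam, h1, h2]

/-- for `γ` the companion matrix of `x^n - t^k`, if
`μ • (g γ(λt) g⁻¹) = γ(t)` and `g e_1 = e_1` then `μ^n λ^k = 1` and
`g = diag(1, μ⁻¹, ..., μ^(1-n))`; consequently the stabilizer of `(γ, e_1)` is the copy of
`ℂ^×` given by `ν ↦ (diag(1, ν^k, ..., ν^((n-1)k)), ν^{-k}, ν^n)`. -/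
theorem stmt4 (n k : ℕ) (hn : 0 < n) (hk : 0 < k) :
    (∀ (μ lam : ℂ), μ ≠ 0 → lam ≠ 0 → ∀ g : (Matrix (Fin n) (Fin n) KK)ˣ,
      (algebraMap ℂ KK μ) •
          ((g : Matrix (Fin n) (Fin n) KK) * gam n ((algebraMap ℂ KK lam * tt) ^ k) *
            ((g⁻¹ : (Matrix (Fin n) (Fin n) KK)ˣ) : Matrix (Fin n) (Fin n) KK)) =
        gam n (tt ^ k) →
      Matrix.mulVec (g : Matrix (Fin n) (Fin n) KK) (e1 n) = e1 n →
      μ ^ n * lam ^ k = 1 ∧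
        (g : Matrix (Fin n) (Fin n) KK) =
          Matrix.diagonal fun i : Fin n => algebraMap ℂ KK ((μ ^ (i : ℕ))⁻¹)) ∧
    (∀ ν : ℂ, ν ≠ 0 →
      (algebraMap ℂ KK ((ν ^ k)⁻¹)) •
          ((Matrix.diagonal fun i : Fin n => algebraMap ℂ KK (ν ^ ((i : ℕ) * k))) *
            gam n ((algebraMap ℂ KK (ν ^ n) * tt) ^ k) *
            (Matrix.diagonal fun i : Fin n => algebraMap ℂ KK ((ν ^ ((i : ℕ) * k))⁻¹))) =
        gam n (tt ^ k) ∧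
      Matrix.mulVec (Matrix.diagonal fun i : Fin n => algebraMap ℂ KK (ν ^ ((i : ℕ) * k)))
        (e1 n) = e1 n) := by
  constructor
  · intro μ lam hμ hlam g heq hv
    exact part1 n k hn hk μ lam hμ hlam g heq hv
  · intro ν hν
    refine ⟨part2 n k hn hk ν hν, ?_⟩
    funext i
    rw [mulVec_e1 hn, Matrix.diagonal_apply]
    by_cases h : i = ⟨0, hn⟩
    · rw [if_pos h, h]
      simp [e1]
    · rw [if_neg h]
      have hne : (i:ℕ) ≠ 0 := fun hh => h (Fin.ext hh)
      simp [e1, hne]
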